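/- Let V be a nonempty finite type with n = |V| ≥ 2, α : V → V → ℝ antisymmetric, and let x ≠ y in V. Let (w, m) and (w', m') be weights on V such that w' x y = w' y x = 0, w v u ≤ w' v u for all pairs {v,u} ≠ {x,y}, and m' v ≤ m v for all v ∈ V. Then λ_k(w, m, α) ≤ λ_{k+1}(w', m', α) for all 1 ≤ k ≤ n − 1. -/

import Mathlib

/-- The magnetic weighted Laplacian `Δ(w,m,α)` as a matrix acting on `ℂ^V`:
`(Δφ)(v) = (1/m v) · Σ_u w v u · (φ(v) − exp(i·α v u)·φ(u))`. -/
noncomputable def magLap {V : Type} [Fintype V] [DecidableEq V]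
    (w : V → V → ℝ) (m : V → ℝ) (α : V → V → ℝ) : Matrix V V ℂ :=
  fun v u => (if v = u then (((∑ u', w v u') / m v : ℝ) : ℂ) else 0)
    - ((w v u / m v : ℝ) : ℂ) * Complex.exp (Complex.I * (α v u : ℝ))

/-- The eigenvalues (with multiplicity, nondecreasing) of a matrix with real
spectrum: real parts of the roots of the characteristic polynomial, sorted;
`lamk A k` is the `(k+1)`-st smallest (0-based index). -/
noncomputable def lamk {V : Type} [Fintype V] [DecidableEq V] (A : Matrix V V ℂ) (k : ℕ) : ℝ :=
  ((A.charpoly.roots.map Complex.re).sort (· ≤ ·)).getD k 0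

open Polynomial Matrix Complex

section Aux
variable {V : Type} [Fintype V] [DecidableEq V]


lemma charpoly_similar {V : Type} [Fintype V] [DecidableEq V] {R : Type} [CommRing R]
    (P A Q : Matrix V V R) (h1 : P * Q = 1) :
    (P * A * Q).charpoly = A.charpoly := by
  have hm : (P.map C) * (Q.map C) = 1 := by
    rw [← Matrix.map_mul, h1, Matrix.map_one _ (map_zero _) (map_one _)]
  have key : charmatrix (P * A * Q) = P.map C * charmatrix A * Q.map C := by
    show Matrix.scalar V (X : R[X]) - (P * A * Q).map C = _
    have hch : charmatrix A = Matrix.scalar V (X : R[X]) - A.map C := rfl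
    rw [hch, mul_sub, sub_mul]
    congr 1
    · rw [← (scalar_commute (X : R[X]) (Commute.all _) (P.map C)).eq, mul_assoc, hm, mul_one]
    · rw [← Matrix.map_mul, ← Matrix.map_mul]
  have : (P * A * Q).charpoly = det (P.map C) * A.charpoly * det (Q.map C) := by
    rw [Matrix.charpoly, key, det_mul, det_mul]; rfl
  rw [this, mul_comm (det (P.map C)), mul_assoc, ← det_mul, hm, det_one, mul_one]

lemma charpoly_diag_roots {V : Type} [Fintype V] [DecidableEq V]
    (d : V → ℂ) : (Matrix.diagonal d).charpoly.roots = Finset.univ.val.map d := by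
  have hch : charmatrix (Matrix.diagonal d)
      = Matrix.diagonal (fun i => (X : ℂ[X]) - C (d i)) := by
    show Matrix.scalar V (X : ℂ[X]) - (Matrix.diagonal d).map C = _
    rw [Matrix.diagonal_map (map_zero C), ← diagonal_sub]
    rfl
  rw [Matrix.charpoly, hch, det_diagonal]
  have : ∏ i : V, ((X : ℂ[X]) - C (d i))
      = (Multiset.map (fun a => (X:ℂ[X]) - C a) (Finset.univ.val.map d)).prod := by
    rw [Multiset.map_map]; rfl
  rw [this, roots_multiset_prod_X_sub_C]

lemma herm_roots_re {V : Type} [Fintype V] [DecidableEq V]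
    {B : Matrix V V ℂ} (hB : B.IsHermitian) :
    B.charpoly.roots.map Complex.re = Finset.univ.val.map hB.eigenvalues := by
  have h1 : B.charpoly = (Matrix.diagonal (RCLike.ofReal ∘ hB.eigenvalues)
      : Matrix V V ℂ).charpoly := by
    conv_lhs => rw [hB.spectral_theorem]
    exact charpoly_similar _ _ _ (by
      simpa using (Matrix.mem_unitaryGroup_iff.mp hB.eigenvectorUnitary.2))
  rw [h1, charpoly_diag_roots, Multiset.map_map]
  congr 1


lemma countP_ge_of_drop {L : List ℝ} (p : ℝ → Bool) {k : ℕ}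
    (h : ∀ a ∈ L.drop k, p a) : L.length - k ≤ L.countP p := by
  calc L.length - k = (L.drop k).length := List.length_drop.symm
    _ = (L.drop k).countP p := (List.countP_eq_length.mpr h).symm
    _ ≤ L.countP p := (List.drop_sublist k L).countP_le

lemma countP_ge_of_take {L : List ℝ} (p : ℝ → Bool) {k : ℕ} (hk : k ≤ L.length)
    (h : ∀ a ∈ L.take k, p a) : k ≤ L.countP p := by
  calc k = (L.take k).length := by rw [List.length_take]; omega
    _ = (L.take k).countP p := (List.countP_eq_length.mpr h).symm
    _ ≤ L.countP p := (List.take_sublist k L).countP_le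

lemma sort_getD_mem {M : Multiset ℝ} {k : ℕ} (hk : k < Multiset.card M) :
    (M.sort (· ≤ ·)).getD k 0 ∈ M := by
  have hlen : (M.sort (· ≤ ·)).length = Multiset.card M := Multiset.length_sort _
  rw [List.getD_eq_getElem _ _ (by omega)]
  exact (Multiset.mem_sort _).mp (List.getElem_mem _)

lemma count_ge_sort {M : Multiset ℝ} {k : ℕ} (hk : k < Multiset.card M) :
    Multiset.card M - k ≤ Multiset.countP
      (fun a => (M.sort (· ≤ ·)).getD k 0 ≤ a) M := by
  set L := M.sort (· ≤ ·) with hL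
  have hlen : L.length = Multiset.card M := Multiset.length_sort _
  have hs : L.Pairwise (· ≤ ·) := Multiset.pairwise_sort _ _
  have hM : Multiset.countP (fun a => L.getD k 0 ≤ a) M
      = L.countP (fun b => decide (L.getD k 0 ≤ b)) := by
    conv_lhs => rw [← Multiset.sort_eq M (· ≤ ·), ← hL]
    exact Multiset.coe_countP _ _
  rw [hM, ← hlen]
  have hkL : k < L.length := by rw [hlen]; exact hk
  apply countP_ge_of_drop
  intro a ha
  rw [List.mem_iff_getElem] at ha
  obtain ⟨j, hj, rfl⟩ := ha
  have hdl : (L.drop k).length = L.length - k := List.length_drop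
  have h1 : (L.drop k)[j] = L[k + j]'(by omega) := by
    rw [List.getElem_drop]
  simp only [h1, decide_eq_true_eq]
  rw [List.getD_eq_getElem _ _ (by omega)]
  exact List.Pairwise.rel_get_of_le hs (a := ⟨k, by omega⟩) (b := ⟨k + j, by omega⟩) (by simp)

lemma count_le_sort {M : Multiset ℝ} {k : ℕ} (hk : k < Multiset.card M) :
    k + 1 ≤ Multiset.countP
      (fun a => a ≤ (M.sort (· ≤ ·)).getD k 0) M := by
  set L := M.sort (· ≤ ·) with hL
  have hlen : L.length = Multiset.card M := Multiset.length_sort _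
  have hs : L.Pairwise (· ≤ ·) := Multiset.pairwise_sort _ _
  have hM : Multiset.countP (fun a => a ≤ L.getD k 0) M
      = L.countP (fun b => decide (b ≤ L.getD k 0)) := by
    conv_lhs => rw [← Multiset.sort_eq M (· ≤ ·), ← hL]
    exact Multiset.coe_countP _ _
  rw [hM]
  have hkL : k < L.length := by rw [hlen]; exact hk
  refine countP_ge_of_take _ (by omega) ?_
  intro a ha
  rw [List.mem_iff_getElem] at ha
  obtain ⟨j, hj, rfl⟩ := ha
  have hj' : j < L.length := by
    have := (List.length_take : (L.take (k+1)).length = _); have : j < min (k+1) L.length := by omega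
    omega
  have h1 : (L.take (k+1))[j] = L[j]'hj' := List.getElem_take
  simp only [h1, decide_eq_true_eq]
  rw [List.getD_eq_getElem _ _ (by omega)]
  have hjk : j ≤ k := by
    have := (List.length_take : (L.take (k+1)).length = _)
    have : j < min (k+1) L.length := by omega
    omega
  exact List.Pairwise.rel_get_of_le hs (a := ⟨j, hj'⟩) (b := ⟨k, by omega⟩) (by simp [hjk])

lemma inner_eq_dot (φ χ : V → ℂ) :
    (inner ℂ ((WithLp.equiv 2 (V → ℂ)).symm φ) ((WithLp.equiv 2 (V → ℂ)).symm χ) : ℂ)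
      = star φ ⬝ᵥ χ := by
  rw [EuclideanSpace.inner_eq_star_dotProduct]
  simp
  exact dotProduct_comm _ _

lemma herm_repr_mul {B : Matrix V V ℂ} (hB : B.IsHermitian) (φ : V → ℂ) (i : V) :
    hB.eigenvectorBasis.repr ((WithLp.equiv 2 (V → ℂ)).symm (B *ᵥ φ)) i
      = (hB.eigenvalues i : ℂ)
        * hB.eigenvectorBasis.repr ((WithLp.equiv 2 (V → ℂ)).symm φ) i := by
  have hsym := (Matrix.isHermitian_iff_isSymmetric.mp hB)
  have hg : Matrix.toEuclideanLin B (hB.eigenvectorBasis i)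
      = hB.eigenvalues i • hB.eigenvectorBasis i := by
    apply (WithLp.equiv 2 (V → ℂ)).injective
    simp [Matrix.toEuclideanLin_apply, hB.mulVec_eigenvectorBasis i]
  calc hB.eigenvectorBasis.repr ((WithLp.equiv 2 (V → ℂ)).symm (B *ᵥ φ)) i
      = inner ℂ (hB.eigenvectorBasis i)
          (Matrix.toEuclideanLin B ((WithLp.equiv 2 (V → ℂ)).symm φ)) := by
        rw [OrthonormalBasis.repr_apply_apply, Matrix.toEuclideanLin_apply]
        simp
    _ = inner ℂ (Matrix.toEuclideanLin B (hB.eigenvectorBasis i))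
          ((WithLp.equiv 2 (V → ℂ)).symm φ) := (hsym _ _).symm
    _ = (hB.eigenvalues i : ℂ)
        * hB.eigenvectorBasis.repr ((WithLp.equiv 2 (V → ℂ)).symm φ) i := by
        rw [hg, RCLike.real_smul_eq_coe_smul (K := ℂ), inner_smul_left]
        simp [Complex.conj_ofReal, OrthonormalBasis.repr_apply_apply]

lemma herm_form {B : Matrix V V ℂ} (hB : B.IsHermitian) (φ : V → ℂ) :
    (star φ ⬝ᵥ (B *ᵥ φ)).re
      = ∑ i, hB.eigenvalues i
          * Complex.normSq (hB.eigenvectorBasis.repr ((WithLp.equiv 2 (V → ℂ)).symm φ) i) := by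
  have h1 : star φ ⬝ᵥ (B *ᵥ φ)
      = inner ℂ ((WithLp.equiv 2 (V → ℂ)).symm φ) ((WithLp.equiv 2 (V → ℂ)).symm (B *ᵥ φ)) :=
    (inner_eq_dot _ _).symm
  rw [h1, ← hB.eigenvectorBasis.repr.inner_map_map, PiLp.inner_apply, Complex.re_sum]
  apply Finset.sum_congr rfl
  intro i _
  rw [RCLike.inner_apply, herm_repr_mul hB φ i]
  set c := hB.eigenvectorBasis.repr ((WithLp.equiv 2 (V → ℂ)).symm φ) i with hc
  have h2 : (hB.eigenvalues i : ℂ) * c * (starRingEnd ℂ) c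
      = (hB.eigenvalues i : ℂ) * (Complex.normSq c : ℂ) := by
    rw [Complex.normSq_eq_conj_mul_self]; ring
  rw [h2, ← Complex.ofReal_mul, Complex.ofReal_re]

lemma parseval_sum (E : OrthonormalBasis V ℂ (EuclideanSpace ℂ V)) (φ : V → ℂ) :
    ∑ v, Complex.normSq (φ v)
      = ∑ i, Complex.normSq (E.repr ((WithLp.equiv 2 (V → ℂ)).symm φ) i) := by
  have h1 : (inner ℂ ((WithLp.equiv 2 (V → ℂ)).symm φ) ((WithLp.equiv 2 (V → ℂ)).symm φ) : ℂ)
      = inner ℂ (E.repr ((WithLp.equiv 2 (V → ℂ)).symm φ))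
          (E.repr ((WithLp.equiv 2 (V → ℂ)).symm φ)) := (E.repr.inner_map_map _ _).symm
  rw [PiLp.inner_apply, PiLp.inner_apply] at h1
  have h2 := congrArg Complex.re h1
  have h3 : ∀ z : ℂ, ((‖z‖ : ℂ) ^ 2).re = Complex.normSq z := fun z => by
    rw [← Complex.ofReal_pow, Complex.ofReal_re, Complex.normSq_eq_norm_sq]
  simpa [RCLike.inner_apply, Complex.re_sum, ← Complex.normSq_eq_conj_mul_self, h3] using h2

lemma pair_identity (a b e : ℂ) (he : e * (starRingEnd ℂ) e = 1) :
    ((starRingEnd ℂ) a * (a - e * b)).re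
      + ((starRingEnd ℂ) b * (b - (starRingEnd ℂ) e * a)).re
      = Complex.normSq (a - e * b) := by
  have h : (starRingEnd ℂ) a * (a - e * b) + (starRingEnd ℂ) b * (b - (starRingEnd ℂ) e * a)
      = (a - e * b) * (starRingEnd ℂ) (a - e * b) := by
    rw [map_sub, _root_.map_mul]
    linear_combination (-(b * (starRingEnd ℂ) b)) * he
  calc ((starRingEnd ℂ) a * (a - e * b)).re
      + ((starRingEnd ℂ) b * (b - (starRingEnd ℂ) e * a)).re
      = (((starRingEnd ℂ) a * (a - e * b))
        + ((starRingEnd ℂ) b * (b - (starRingEnd ℂ) e * a))).re := (Complex.add_re _ _).symm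
    _ = ((a - e * b) * (starRingEnd ℂ) (a - e * b)).re := by rw [h]
    _ = Complex.normSq (a - e * b) := by rw [Complex.mul_conj, Complex.ofReal_re]

lemma normSq_flip (a b e : ℂ) (he : e * (starRingEnd ℂ) e = 1) :
    Complex.normSq (b - (starRingEnd ℂ) e * a) = Complex.normSq (a - e * b) := by
  have h1 : Complex.normSq e = 1 := by
    have := congrArg Complex.re (Complex.mul_conj e ▸ he)
    simpa using this
  have h2 : b - (starRingEnd ℂ) e * a = (starRingEnd ℂ) e * (e * b - a) := by
    have : (starRingEnd ℂ) e * e = 1 := by rw [mul_comm] at he; exact he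
    calc b - (starRingEnd ℂ) e * a = ((starRingEnd ℂ) e * e) * b - (starRingEnd ℂ) e * a := by
          rw [this, one_mul]
      _ = (starRingEnd ℂ) e * (e * b - a) := by ring
  rw [h2, Complex.normSq_mul, Complex.normSq_conj, h1, one_mul, ← Complex.normSq_neg, neg_sub]

lemma sum_sym_eq {f g : V → V → ℝ} (h : ∀ v u, f v u + f u v = g v u + g u v) :
    ∑ v, ∑ u, f v u = ∑ v, ∑ u, g v u := by
  have hf : ∑ v, ∑ u, f v u = ∑ v, ∑ u, f u v := Finset.sum_comm
  have hg : ∑ v, ∑ u, g v u = ∑ v, ∑ u, g u v := Finset.sum_comm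
  have h2 : (∑ v, ∑ u, f v u) + (∑ v, ∑ u, f u v)
      = (∑ v, ∑ u, g v u) + (∑ v, ∑ u, g u v) := by
    rw [← Finset.sum_add_distrib, ← Finset.sum_add_distrib]
    apply Finset.sum_congr rfl; intro v _
    rw [← Finset.sum_add_distrib, ← Finset.sum_add_distrib]
    exact Finset.sum_congr rfl fun u _ => h v u
  linarith

lemma exp_mul_exp (α : V → V → ℝ) (hα : ∀ v u, α v u = - α u v) (v u : V) :
    Complex.exp (Complex.I * (α v u : ℝ)) * Complex.exp (Complex.I * (α u v : ℝ)) = 1 := by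
  rw [← Complex.exp_add]
  rw [show Complex.I * (α v u : ℝ) + Complex.I * (α u v : ℝ) = 0 from by
    push_cast [hα v u]; ring]
  exact Complex.exp_zero

lemma conj_exp (α : V → V → ℝ) (hα : ∀ v u, α v u = - α u v) (v u : V) :
    (starRingEnd ℂ) (Complex.exp (Complex.I * (α v u : ℝ)))
      = Complex.exp (Complex.I * (α u v : ℝ)) := by
  rw [← Complex.exp_conj]
  congr 1
  rw [_root_.map_mul, Complex.conj_I, Complex.conj_ofReal]
  push_cast [hα v u]
  ring

lemma mag_mulVec (w : V → V → ℝ) (m : V → ℝ) (α : V → V → ℝ) (hm : ∀ v, 0 < m v)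
    (φ : V → ℂ) (v : V) :
    (m v : ℂ) * (magLap w m α *ᵥ φ) v
      = ∑ u, (w v u : ℂ) * (φ v - Complex.exp (Complex.I * (α v u : ℝ)) * φ u) := by
  have hmv : (m v : ℂ) ≠ 0 := by exact_mod_cast (hm v).ne'
  have h1 : (magLap w m α *ᵥ φ) v
      = (∑ u', ((w v u' : ℝ) : ℂ)) * ((m v : ℂ))⁻¹ * φ v
        - ∑ u, ((w v u : ℝ) : ℂ) * ((m v : ℂ))⁻¹
            * (Complex.exp (Complex.I * (α v u : ℝ)) * φ u) := by
    show ∑ u, magLap w m α v u * φ u = _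
    unfold magLap
    rw [show (∑ u, ((if v = u then (((∑ u', w v u') / m v : ℝ) : ℂ) else 0)
        - ((w v u / m v : ℝ) : ℂ) * Complex.exp (Complex.I * (α v u : ℝ))) * φ u)
      = ∑ u, ((if v = u then (((∑ u', w v u') / m v : ℝ) : ℂ) * φ u else 0)
        - ((w v u / m v : ℝ) : ℂ) * Complex.exp (Complex.I * (α v u : ℝ)) * φ u)
      from Finset.sum_congr rfl fun u _ => by by_cases h : v = u <;> simp [h] <;> ring]
    rw [Finset.sum_sub_distrib, Finset.sum_ite_eq]
    simp only [Finset.mem_univ, if_true]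
    push_cast
    ring_nf
  rw [h1, mul_sub, Finset.mul_sum]
  have hp1 : (m v : ℂ) * ((∑ u', ((w v u' : ℝ) : ℂ)) * ((m v : ℂ))⁻¹ * φ v)
      = ∑ u, (w v u : ℂ) * φ v := by
    rw [← Finset.sum_mul]
    field_simp
  have hp2 : ∀ u, (m v : ℂ) * ((w v u : ℂ) * ((m v : ℂ))⁻¹
        * (Complex.exp (Complex.I * (α v u : ℝ)) * φ u))
      = (w v u : ℂ) * (Complex.exp (Complex.I * (α v u : ℝ)) * φ u) := by
    intro u; field_simp
  rw [hp1, Finset.sum_congr rfl fun u _ => hp2 u, ← Finset.sum_sub_distrib]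
  exact Finset.sum_congr rfl fun u _ => by ring

lemma quad_eq (w : V → V → ℝ) (m : V → ℝ) (α : V → V → ℝ)
    (hw_symm : ∀ v u, w v u = w u v) (hm : ∀ v, 0 < m v) (hα : ∀ v u, α v u = - α u v)
    (φ : V → ℂ) :
    (star (fun v => ((Real.sqrt (m v) : ℝ) : ℂ) * φ v) ⬝ᵥ
      ((Matrix.diagonal (fun v => ((Real.sqrt (m v) : ℝ) : ℂ)) * magLap w m α *
        Matrix.diagonal (fun v => (((Real.sqrt (m v))⁻¹ : ℝ) : ℂ))) *ᵥ
        (fun v => ((Real.sqrt (m v) : ℝ) : ℂ) * φ v))).re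
      = ∑ v, ∑ u, w v u / 2
          * Complex.normSq (φ v - Complex.exp (Complex.I * (α v u : ℝ)) * φ u) := by
  have hsd0 : ∀ v, 0 < Real.sqrt (m v) := fun v => Real.sqrt_pos.mpr (hm v)
  have hsdm : ∀ v, ((Real.sqrt (m v) : ℝ) : ℂ) * ((Real.sqrt (m v) : ℝ) : ℂ) = (m v : ℂ) := by
    intro v; rw [← Complex.ofReal_mul, Real.mul_self_sqrt (hm v).le]
  have hinv : (Matrix.diagonal (fun v => (((Real.sqrt (m v))⁻¹ : ℝ) : ℂ))) *ᵥ
      (fun v => ((Real.sqrt (m v) : ℝ) : ℂ) * φ v) = φ := by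
    funext v
    rw [Matrix.mulVec_diagonal]
    push_cast
    exact inv_mul_cancel_left₀ (by exact_mod_cast (hsd0 v).ne') (φ v)
  have hfull : (Matrix.diagonal (fun v => ((Real.sqrt (m v) : ℝ) : ℂ)) * magLap w m α *
        Matrix.diagonal (fun v => (((Real.sqrt (m v))⁻¹ : ℝ) : ℂ))) *ᵥ
        (fun v => ((Real.sqrt (m v) : ℝ) : ℂ) * φ v)
      = fun v => ((Real.sqrt (m v) : ℝ) : ℂ) * ((magLap w m α *ᵥ φ) v) := by
    rw [← Matrix.mulVec_mulVec, ← Matrix.mulVec_mulVec, hinv]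
    funext v
    rw [Matrix.mulVec_diagonal]
  rw [hfull]
  have hdot : star (fun v => ((Real.sqrt (m v) : ℝ) : ℂ) * φ v) ⬝ᵥ
      (fun v => ((Real.sqrt (m v) : ℝ) : ℂ) * ((magLap w m α *ᵥ φ) v))
      = ∑ v, ∑ u, (w v u : ℂ)
          * ((starRingEnd ℂ) (φ v)
            * (φ v - Complex.exp (Complex.I * (α v u : ℝ)) * φ u)) := by
    unfold dotProduct
    apply Finset.sum_congr rfl
    intro v _
    simp only [Pi.star_apply]
    have h1 : star (((Real.sqrt (m v) : ℝ) : ℂ) * φ v)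
        * (((Real.sqrt (m v) : ℝ) : ℂ) * ((magLap w m α *ᵥ φ) v))
        = (starRingEnd ℂ) (φ v) * ((m v : ℂ) * (magLap w m α *ᵥ φ) v) := by
      rw [star_mul']
      rw [show star (((Real.sqrt (m v) : ℝ) : ℂ)) = ((Real.sqrt (m v) : ℝ) : ℂ)
        from Complex.conj_ofReal _]
      rw [← hsdm v]
      show ((Real.sqrt (m v) : ℝ) : ℂ) * (starRingEnd ℂ) (φ v) * _ = _
      ring
    rw [h1, mag_mulVec w m α hm φ v, Finset.mul_sum]
    exact Finset.sum_congr rfl fun u _ => by ring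
  rw [hdot]
  rw [show (∑ v, ∑ u, (w v u : ℂ) * ((starRingEnd ℂ) (φ v)
        * (φ v - Complex.exp (Complex.I * (α v u : ℝ)) * φ u))).re
      = ∑ v, ∑ u, ((w v u : ℂ) * ((starRingEnd ℂ) (φ v)
        * (φ v - Complex.exp (Complex.I * (α v u : ℝ)) * φ u))).re from by
    rw [Complex.re_sum]
    exact Finset.sum_congr rfl fun v _ => Complex.re_sum _ _]
  apply sum_sym_eq
  intro v u
  have he : Complex.exp (Complex.I * (α v u : ℝ))
      * (starRingEnd ℂ) (Complex.exp (Complex.I * (α v u : ℝ))) = 1 := by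
    rw [conj_exp α hα v u]
    exact exp_mul_exp α hα v u
  have heq : Complex.exp (Complex.I * (α u v : ℝ))
      = (starRingEnd ℂ) (Complex.exp (Complex.I * (α v u : ℝ))) := (conj_exp α hα v u).symm
  rw [Complex.re_ofReal_mul, Complex.re_ofReal_mul, hw_symm u v, heq]
  rw [normSq_flip (φ v) (φ u) _ he]
  rw [← pair_identity (φ v) (φ u) _ he]
  ring

lemma magB_isHermitian (w : V → V → ℝ) (m : V → ℝ) (α : V → V → ℝ)
    (hw_symm : ∀ v u, w v u = w u v) (hw_diag : ∀ v, w v v = 0)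
    (hm : ∀ v, 0 < m v) (hα : ∀ v u, α v u = - α u v) :
    (Matrix.diagonal (fun v => ((Real.sqrt (m v) : ℝ) : ℂ)) * magLap w m α *
      Matrix.diagonal (fun v => (((Real.sqrt (m v))⁻¹ : ℝ) : ℂ))).IsHermitian := by
  have hsd0 : ∀ v, 0 < Real.sqrt (m v) := fun v => Real.sqrt_pos.mpr (hm v)
  have hsdne : ∀ v, ((Real.sqrt (m v) : ℝ) : ℂ) ≠ 0 := by
    intro v; exact_mod_cast (hsd0 v).ne'
  have hsdm : ∀ v, ((Real.sqrt (m v) : ℝ) : ℂ) * ((Real.sqrt (m v) : ℝ) : ℂ) = (m v : ℂ) := by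
    intro v; rw [← Complex.ofReal_mul, Real.mul_self_sqrt (hm v).le]
  have hent : ∀ v u, (m v : ℂ) * magLap w m α v u
      = (m u : ℂ) * (starRingEnd ℂ) (magLap w m α u v) := by
    intro v u
    have hmv : (m v : ℂ) ≠ 0 := by exact_mod_cast (hm v).ne'
    have hmu : (m u : ℂ) ≠ 0 := by exact_mod_cast (hm u).ne'
    unfold magLap
    by_cases h : v = u
    · subst h
      simp only [if_pos rfl, hw_diag v]
      push_cast
      rw [map_sub, _root_.map_mul]
      simp [Complex.conj_ofReal, ← Complex.exp_conj]
    · have h' : ¬ u = v := fun hh => h hh.symm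
      simp only [if_neg h, if_neg h', zero_sub, map_neg, _root_.map_mul]
      rw [conj_exp α hα u v]
      rw [show (starRingEnd ℂ) ((w u v / m u : ℝ) : ℂ) = ((w u v / m u : ℝ) : ℂ)
        from Complex.conj_ofReal _]
      rw [hw_symm u v]
      push_cast
      field_simp
  show _ᴴ = _
  apply Matrix.ext
  intro v u
  rw [Matrix.conjTranspose_apply, Matrix.mul_diagonal, Matrix.diagonal_mul,
    Matrix.mul_diagonal, Matrix.diagonal_mul]
  have h := hent v u
  have h2 : ((Real.sqrt (m u) : ℝ) : ℂ) * ((Real.sqrt (m u) : ℝ) : ℂ)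
        * (starRingEnd ℂ) (magLap w m α u v)
      = ((Real.sqrt (m v) : ℝ) : ℂ) * ((Real.sqrt (m v) : ℝ) : ℂ) * magLap w m α v u := by
    rw [hsdm u, hsdm v]
    linear_combination -h
  simp only [star_mul', Complex.star_def, Complex.conj_ofReal]
  push_cast
  rw [← div_eq_mul_inv, ← div_eq_mul_inv, div_eq_div_iff (hsdne v) (hsdne u)]
  linear_combination h2

noncomputable def Tmap (d : V → ℝ) : (V → ℂ) →ₗ[ℂ] (V → ℂ) :=
  LinearMap.pi (fun v => ((d v : ℂ)) • LinearMap.proj v)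

lemma Tmap_apply (d : V → ℝ) (φ : V → ℂ) : Tmap d φ = fun v => ((d v : ℝ) : ℂ) * φ v := rfl

noncomputable def Rmap (d : V → ℝ) (E : OrthonormalBasis V ℂ (EuclideanSpace ℂ V)) :
    (V → ℂ) →ₗ[ℂ] (V → ℂ) :=
  (WithLp.linearEquiv 2 ℂ (V → ℂ)).toLinearMap
    ∘ₗ (E.repr.toLinearEquiv : EuclideanSpace ℂ V ≃ₗ[ℂ] EuclideanSpace ℂ V).toLinearMap
    ∘ₗ (WithLp.linearEquiv 2 ℂ (V → ℂ)).symm.toLinearMap ∘ₗ Tmap d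

lemma Rmap_apply (d : V → ℝ) (E : OrthonormalBasis V ℂ (EuclideanSpace ℂ V)) (φ : V → ℂ)
    (i : V) :
    Rmap d E φ i
      = E.repr ((WithLp.equiv 2 (V → ℂ)).symm (fun v => ((d v : ℝ) : ℂ) * φ v)) i := rfl



lemma diag_mul_inv_diag (m : V → ℝ) (hm : ∀ v, 0 < m v) :
    Matrix.diagonal (fun v => ((Real.sqrt (m v) : ℝ) : ℂ)) *
      Matrix.diagonal (fun v => (((Real.sqrt (m v))⁻¹ : ℝ) : ℂ)) = 1 := by
  rw [Matrix.diagonal_mul_diagonal]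
  rw [show (fun v => ((Real.sqrt (m v) : ℝ) : ℂ) * (((Real.sqrt (m v))⁻¹ : ℝ) : ℂ))
      = fun _ => (1 : ℂ) from funext fun v => by
    have : ((Real.sqrt (m v) : ℝ) : ℂ) ≠ 0 := by
      exact_mod_cast (Real.sqrt_pos.mpr (hm v)).ne'
    push_cast
    field_simp]
  exact Matrix.diagonal_one

lemma lamk_eq_eigs (w : V → V → ℝ) (m : V → ℝ) (α : V → V → ℝ) (hm : ∀ v, 0 < m v)
    (hBH : (Matrix.diagonal (fun v => ((Real.sqrt (m v) : ℝ) : ℂ)) * magLap w m α *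
      Matrix.diagonal (fun v => (((Real.sqrt (m v))⁻¹ : ℝ) : ℂ))).IsHermitian) (j : ℕ) :
    lamk (magLap w m α) j
      = ((Finset.univ.val.map hBH.eigenvalues).sort (· ≤ ·)).getD j 0 := by
  unfold lamk
  rw [← charpoly_similar (Matrix.diagonal fun v => ((Real.sqrt (m v) : ℝ) : ℂ)) (magLap w m α)
        (Matrix.diagonal fun v => (((Real.sqrt (m v))⁻¹ : ℝ) : ℂ)) (diag_mul_inv_diag m hm),
      herm_roots_re hBH]

lemma lower_step (w : V → V → ℝ) (m : V → ℝ) (α : V → V → ℝ)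
    (hm : ∀ v, 0 < m v)
    (hBH : (Matrix.diagonal (fun v => ((Real.sqrt (m v) : ℝ) : ℂ)) * magLap w m α *
      Matrix.diagonal (fun v => (((Real.sqrt (m v))⁻¹ : ℝ) : ℂ))).IsHermitian)
    (c : ℝ) (φ : V → ℂ)
    (h0 : ∀ i, ¬ (c ≤ hBH.eigenvalues i) →
      hBH.eigenvectorBasis.repr ((WithLp.equiv 2 (V → ℂ)).symm
        (fun v => ((Real.sqrt (m v) : ℝ) : ℂ) * φ v)) i = 0) :
    c * ∑ v, m v * Complex.normSq (φ v)
      ≤ (star (fun v => ((Real.sqrt (m v) : ℝ) : ℂ) * φ v) ⬝ᵥ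
          ((Matrix.diagonal (fun v => ((Real.sqrt (m v) : ℝ) : ℂ)) * magLap w m α *
            Matrix.diagonal (fun v => (((Real.sqrt (m v))⁻¹ : ℝ) : ℂ))) *ᵥ
            (fun v => ((Real.sqrt (m v) : ℝ) : ℂ) * φ v))).re := by
  rw [herm_form hBH]
  have e1 : c * ∑ v, m v * Complex.normSq (φ v)
      = ∑ i, c * Complex.normSq (hBH.eigenvectorBasis.repr ((WithLp.equiv 2 (V → ℂ)).symm
          (fun v => ((Real.sqrt (m v) : ℝ) : ℂ) * φ v)) i) := by
    rw [← Finset.mul_sum, ← parseval_sum hBH.eigenvectorBasis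
        (fun v => ((Real.sqrt (m v) : ℝ) : ℂ) * φ v),
      show (∑ v, Complex.normSq (((Real.sqrt (m v) : ℝ) : ℂ) * φ v))
          = ∑ v, m v * Complex.normSq (φ v) from Finset.sum_congr rfl fun v _ => by
        rw [Complex.normSq_mul, Complex.normSq_ofReal, Real.mul_self_sqrt (hm v).le]]
  rw [e1]
  apply Finset.sum_le_sum
  intro i _
  by_cases hi : c ≤ hBH.eigenvalues i
  · exact mul_le_mul_of_nonneg_right hi (Complex.normSq_nonneg _)
  · rw [h0 i hi]
    simp

lemma upper_step (w : V → V → ℝ) (m : V → ℝ) (α : V → V → ℝ)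
    (hm : ∀ v, 0 < m v)
    (hBH : (Matrix.diagonal (fun v => ((Real.sqrt (m v) : ℝ) : ℂ)) * magLap w m α *
      Matrix.diagonal (fun v => (((Real.sqrt (m v))⁻¹ : ℝ) : ℂ))).IsHermitian)
    (c : ℝ) (φ : V → ℂ)
    (h0 : ∀ i, ¬ (hBH.eigenvalues i ≤ c) →
      hBH.eigenvectorBasis.repr ((WithLp.equiv 2 (V → ℂ)).symm
        (fun v => ((Real.sqrt (m v) : ℝ) : ℂ) * φ v)) i = 0) :
    (star (fun v => ((Real.sqrt (m v) : ℝ) : ℂ) * φ v) ⬝ᵥ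
          ((Matrix.diagonal (fun v => ((Real.sqrt (m v) : ℝ) : ℂ)) * magLap w m α *
            Matrix.diagonal (fun v => (((Real.sqrt (m v))⁻¹ : ℝ) : ℂ))) *ᵥ
            (fun v => ((Real.sqrt (m v) : ℝ) : ℂ) * φ v))).re
      ≤ c * ∑ v, m v * Complex.normSq (φ v) := by
  rw [herm_form hBH]
  have e1 : c * ∑ v, m v * Complex.normSq (φ v)
      = ∑ i, c * Complex.normSq (hBH.eigenvectorBasis.repr ((WithLp.equiv 2 (V → ℂ)).symm
          (fun v => ((Real.sqrt (m v) : ℝ) : ℂ) * φ v)) i) := by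
    rw [← Finset.mul_sum, ← parseval_sum hBH.eigenvectorBasis
        (fun v => ((Real.sqrt (m v) : ℝ) : ℂ) * φ v),
      show (∑ v, Complex.normSq (((Real.sqrt (m v) : ℝ) : ℂ) * φ v))
          = ∑ v, m v * Complex.normSq (φ v) from Finset.sum_congr rfl fun v _ => by
        rw [Complex.normSq_mul, Complex.normSq_ofReal, Real.mul_self_sqrt (hm v).le]]
  rw [e1]
  apply Finset.sum_le_sum
  intro i _
  by_cases hi : hBH.eigenvalues i ≤ c
  · exact mul_le_mul_of_nonneg_right hi (Complex.normSq_nonneg _)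
  · rw [h0 i hi]
    simp


end Aux

/-- deleting the edge `{x,y}` while possibly increasing the
remaining edge weights and decreasing the vertex weights shifts the
eigenvalues up by at most one index: `λ_k ≤ λ'_{k+1}`. -/
theorem stmt10 {V : Type} [Fintype V] [DecidableEq V] [Nonempty V]
    (hn : 2 ≤ Fintype.card V)
    (w w' : V → V → ℝ) (m m' : V → ℝ) (α : V → V → ℝ)
    (x y : V) (hxy : x ≠ y)
    (hw_symm : ∀ v u, w v u = w u v) (hw_nonneg : ∀ v u, 0 ≤ w v u)
    (hw_diag : ∀ v, w v v = 0)
    (hw'_symm : ∀ v u, w' v u = w' u v) (hw'_nonneg : ∀ v u, 0 ≤ w' v u)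
    (hw'_diag : ∀ v, w' v v = 0)
    (hm : ∀ v, 0 < m v) (hm' : ∀ v, 0 < m' v)
    (hα : ∀ v u, α v u = - α u v)
    (hdel : w' x y = 0) (hdel' : w' y x = 0)
    (hww' : ∀ v u, s(v, u) ≠ s(x, y) → w v u ≤ w' v u)
    (hmm' : ∀ v, m' v ≤ m v) :
    ∀ k : ℕ, 1 ≤ k → k ≤ Fintype.card V - 1 →
      lamk (magLap w m α) (k - 1) ≤ lamk (magLap w' m' α) k  := by
  intro k hk1 hk2
  classical
  have hBH := magB_isHermitian w m α hw_symm hw_diag hm hα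
  have hB'H := magB_isHermitian w' m' α hw'_symm hw'_diag hm' hα
  set ℓ : ℝ := lamk (magLap w m α) (k - 1) with hℓdef
  set ℓ' : ℝ := lamk (magLap w' m' α) k with hℓ'def
  show ℓ ≤ ℓ'
  have hcard : Multiset.card (Finset.univ.val.map hBH.eigenvalues) = Fintype.card V := by simp
  have hcard' : Multiset.card (Finset.univ.val.map hB'H.eigenvalues) = Fintype.card V := by simp
  have hkn : k < Fintype.card V := by omega
  have hk1n : k - 1 < Fintype.card V := by omega
  have hℓeq : ℓ = ((Finset.univ.val.map hBH.eigenvalues).sort (· ≤ ·)).getD (k - 1) 0 := by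
    rw [hℓdef]; exact lamk_eq_eigs w m α hm hBH (k - 1)
  have hℓ'eq : ℓ' = ((Finset.univ.val.map hB'H.eigenvalues).sort (· ≤ ·)).getD k 0 := by
    rw [hℓ'def]; exact lamk_eq_eigs w' m' α hm' hB'H k
  have hS : Fintype.card V - (k - 1)
      ≤ (Finset.univ.filter (fun i => ℓ ≤ hBH.eigenvalues i)).card := by
    have h := count_ge_sort (M := Finset.univ.val.map hBH.eigenvalues) (k := k - 1)
      (by rw [hcard]; exact hk1n)
    rw [Multiset.countP_map, hcard] at h
    rw [hℓeq, Finset.card_def, Finset.filter_val]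
    exact h
  have hS' : k + 1 ≤ (Finset.univ.filter (fun i => hB'H.eigenvalues i ≤ ℓ')).card := by
    have h := count_le_sort (M := Finset.univ.val.map hB'H.eigenvalues) (k := k)
      (by rw [hcard']; exact hkn)
    rw [Multiset.countP_map] at h
    rw [hℓ'eq, Finset.card_def, Finset.filter_val]
    exact h
  have hQ'nonneg : ∀ φ : V → ℂ, 0 ≤ ∑ v, ∑ u, w' v u / 2
      * Complex.normSq (φ v - Complex.exp (Complex.I * (α v u : ℝ)) * φ u) := by
    intro φ
    apply Finset.sum_nonneg; intro v _
    apply Finset.sum_nonneg; intro u _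
    exact mul_nonneg (by linarith [hw'_nonneg v u]) (Complex.normSq_nonneg _)
  have hf'nonneg : ∀ i, 0 ≤ hB'H.eigenvalues i := by
    intro i
    have hev := hB'H.eigenvalues_eq i
    set ψ : V → ℂ := (WithLp.equiv 2 (V → ℂ)) (hB'H.eigenvectorBasis i) with hψdef
    have hsd'ne : ∀ v, ((Real.sqrt (m' v) : ℝ) : ℂ) ≠ 0 := by
      intro v
      exact_mod_cast (Real.sqrt_pos.mpr (hm' v)).ne'
    have hTψ : (fun v => ((Real.sqrt (m' v) : ℝ) : ℂ)
        * ((fun u => (((Real.sqrt (m' u))⁻¹ : ℝ) : ℂ) * ψ u) v)) = ψ := by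
      funext v
      push_cast
      rw [mul_inv_cancel_left₀ (hsd'ne v)]
    have hq := quad_eq w' m' α hw'_symm hm' hα
      (fun u => (((Real.sqrt (m' u))⁻¹ : ℝ) : ℂ) * ψ u)
    rw [hTψ] at hq
    have hev' : hB'H.eigenvalues i = (star ψ ⬝ᵥ
        ((Matrix.diagonal (fun v => ((Real.sqrt (m' v) : ℝ) : ℂ)) * magLap w' m' α *
          Matrix.diagonal (fun v => (((Real.sqrt (m' v))⁻¹ : ℝ) : ℂ))) *ᵥ ψ)).re := hev
    rw [hev', hq]
    exact hQ'nonneg _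
  have hℓ'0 : 0 ≤ ℓ' := by
    have hmem : ℓ' ∈ Finset.univ.val.map hB'H.eigenvalues := by
      rw [hℓ'eq]
      exact sort_getD_mem (by rw [hcard']; exact hkn)
    obtain ⟨i, _, hi⟩ := Multiset.mem_map.mp hmem
    rw [← hi]
    exact hf'nonneg i
  -- kernel construction
  set Θ : (V → ℂ) →ₗ[ℂ] (({i : V // ¬ (hB'H.eigenvalues i ≤ ℓ')} → ℂ)
      × (ℂ × ({i : V // ¬ (ℓ ≤ hBH.eigenvalues i)} → ℂ))) :=
    LinearMap.prod
      (LinearMap.pi (fun j => LinearMap.proj (j : V)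
        ∘ₗ Rmap (fun v => Real.sqrt (m' v)) hB'H.eigenvectorBasis))
      (LinearMap.prod
        ((LinearMap.proj x : (V → ℂ) →ₗ[ℂ] ℂ)
          - Complex.exp (Complex.I * (α x y : ℝ)) • (LinearMap.proj y : (V → ℂ) →ₗ[ℂ] ℂ))
        (LinearMap.pi (fun j => LinearMap.proj (j : V)
          ∘ₗ Rmap (fun v => Real.sqrt (m v)) hBH.eigenvectorBasis)))
    with hΘdef
  have hker : LinearMap.ker Θ ≠ ⊥ := by
    intro hbot
    have hinj : Function.Injective Θ := LinearMap.ker_eq_bot.mp hbot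
    have hle := LinearMap.finrank_le_finrank_of_injective hinj
    rw [Module.finrank_pi] at hle
    have hcod : Module.finrank ℂ (({i : V // ¬ (hB'H.eigenvalues i ≤ ℓ')} → ℂ)
        × (ℂ × ({i : V // ¬ (ℓ ≤ hBH.eigenvalues i)} → ℂ)))
        = Fintype.card {i : V // ¬ (hB'H.eigenvalues i ≤ ℓ')}
          + (1 + Fintype.card {i : V // ¬ (ℓ ≤ hBH.eigenvalues i)}) := by
      rw [Module.finrank_prod, Module.finrank_prod, Module.finrank_pi, Module.finrank_pi,
        Module.finrank_self]
    rw [hcod] at hle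
    have hc1 : (Finset.univ.filter (fun i => hB'H.eigenvalues i ≤ ℓ')).card
        + Fintype.card {i : V // ¬ (hB'H.eigenvalues i ≤ ℓ')} = Fintype.card V := by
      rw [Fintype.card_subtype]
      exact Finset.card_filter_add_card_filter_not _
    have hc2 : (Finset.univ.filter (fun i => ℓ ≤ hBH.eigenvalues i)).card
        + Fintype.card {i : V // ¬ (ℓ ≤ hBH.eigenvalues i)} = Fintype.card V := by
      rw [Fintype.card_subtype]
      exact Finset.card_filter_add_card_filter_not _
    omega
  obtain ⟨φ, hφker, hφne⟩ := Submodule.exists_mem_ne_zero_of_ne_bot hker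
  have hΘ0 : Θ φ = 0 := LinearMap.mem_ker.mp hφker
  have h1 : ∀ j : {i : V // ¬ (hB'H.eigenvalues i ≤ ℓ')},
      Rmap (fun v => Real.sqrt (m' v)) hB'H.eigenvectorBasis φ (j : V) = 0 := by
    intro j
    have := congrArg (fun z => z.1 j) hΘ0
    simpa [hΘdef] using this
  have hxy0 : φ x - Complex.exp (Complex.I * (α x y : ℝ)) * φ y = 0 := by
    have := congrArg (fun z => z.2.1) hΘ0
    simpa [hΘdef, smul_eq_mul, sub_eq_zero] using this
  have h2 : ∀ j : {i : V // ¬ (ℓ ≤ hBH.eigenvalues i)},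
      Rmap (fun v => Real.sqrt (m v)) hBH.eigenvectorBasis φ (j : V) = 0 := by
    intro j
    have := congrArg (fun z => z.2.2 j) hΘ0
    simpa [hΘdef] using this
  -- chain of inequalities
  have hφxy : φ x = Complex.exp (Complex.I * (α x y : ℝ)) * φ y := sub_eq_zero.mp hxy0
  have hmono : (∑ v, ∑ u, w v u / 2
        * Complex.normSq (φ v - Complex.exp (Complex.I * (α v u : ℝ)) * φ u))
      ≤ ∑ v, ∑ u, w' v u / 2
        * Complex.normSq (φ v - Complex.exp (Complex.I * (α v u : ℝ)) * φ u) := by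
    apply Finset.sum_le_sum; intro v _
    apply Finset.sum_le_sum; intro u _
    by_cases hvu : s(v, u) = s(x, y)
    · rcases Sym2.eq_iff.mp hvu with ⟨hv, hu⟩ | ⟨hv, hu⟩
      · subst hv; subst hu
        rw [hxy0]
        simp
      · subst hv; subst hu
        have hyx : φ v - Complex.exp (Complex.I * (α v u : ℝ)) * φ u = 0 := by
          rw [hφxy, show Complex.exp (Complex.I * (α v u : ℝ))
              * (Complex.exp (Complex.I * (α u v : ℝ)) * φ v)
            = (Complex.exp (Complex.I * (α v u : ℝ))
              * Complex.exp (Complex.I * (α u v : ℝ))) * φ v from by ring,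
            exp_mul_exp α hα v u, one_mul, sub_self]
        rw [hyx]
        simp
    · exact mul_le_mul_of_nonneg_right (by linarith [hww' v u hvu])
        (Complex.normSq_nonneg _)
  have hlow := lower_step w m α hm hBH ℓ φ (fun i hi => h2 ⟨i, hi⟩)
  have hupp := upper_step w' m' α hm' hB'H ℓ' φ (fun i hi => h1 ⟨i, hi⟩)
  have hq := quad_eq w m α hw_symm hm hα φ
  have hq' := quad_eq w' m' α hw'_symm hm' hα φ
  have hmmle : ℓ' * ∑ v, m' v * Complex.normSq (φ v)
      ≤ ℓ' * ∑ v, m v * Complex.normSq (φ v) := by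
    apply mul_le_mul_of_nonneg_left ?_ hℓ'0
    apply Finset.sum_le_sum; intro v _
    exact mul_le_mul_of_nonneg_right (hmm' v) (Complex.normSq_nonneg _)
  have hSpos : 0 < ∑ v, m v * Complex.normSq (φ v) := by
    have hex : ∃ v, φ v ≠ 0 := by
      by_contra hno
      push_neg at hno
      exact hφne (funext hno)
    obtain ⟨v0, hv0⟩ := hex
    apply Finset.sum_pos' (fun v _ => mul_nonneg (hm v).le (Complex.normSq_nonneg _))
    exact ⟨v0, Finset.mem_univ v0, mul_pos (hm v0) (Complex.normSq_pos.mpr hv0)⟩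
  have hchain : ℓ * ∑ v, m v * Complex.normSq (φ v)
      ≤ ℓ' * ∑ v, m v * Complex.normSq (φ v) := by
    calc ℓ * ∑ v, m v * Complex.normSq (φ v)
        ≤ _ := hlow
      _ = ∑ v, ∑ u, w v u / 2
          * Complex.normSq (φ v - Complex.exp (Complex.I * (α v u : ℝ)) * φ u) := hq
      _ ≤ ∑ v, ∑ u, w' v u / 2
          * Complex.normSq (φ v - Complex.exp (Complex.I * (α v u : ℝ)) * φ u) := hmono
      _ = _ := hq'.symm
      _ ≤ ℓ' * ∑ v, m' v * Complex.normSq (φ v) := hupp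
      _ ≤ ℓ' * ∑ v, m v * Complex.normSq (φ v) := hmmle
  exact le_of_mul_le_mul_right hchain hSpos
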